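/- Let D be a group with a bi-invariant partial order induced by a normal cone C, let f be a dominant element, and let g ∈ D. Then the sequence γₙ(f,g)/n converges as n → ∞, where γₙ(f,g) = inf{p ∈ ℤ : f^p ≥ g^n}. -/
import Mathlib


open Filter

/-- In a group `D` with a bi-invariant partial order induced by a normal
cone `C`, if `f` is a dominant and `g ∈ D`, then `γₙ(f,g)/n` converges as `n → ∞`,
where `γₙ(f,g) = inf{p ∈ ℤ : f^p ≥ g^n}` (assumed finite, i.e. attained as a least
element). -/
theorem relative_growth_limit_exists {D : Type*} [Group D] (C : Set D)
    (hmul : ∀ f g, f ∈ C → g ∈ C → f * g ∈ C)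
    (hconj : ∀ f h, f ∈ C → h * f * h⁻¹ ∈ C)
    (hone : (1 : D) ∈ C)
    (hanti : ∀ f g : D, f * g⁻¹ ∈ C → g * f⁻¹ ∈ C → f = g)
    (f : D) (hfC : f ∈ C) (hfne : f ≠ 1)
    (hdom : ∀ g : D, ∃ n : ℕ, f ^ n * g⁻¹ ∈ C)
    (g : D) (γ : ℕ → ℤ)
    (hγ : ∀ n : ℕ, IsLeast {p : ℤ | f ^ p * (g ^ n)⁻¹ ∈ C} (γ n)) :
    ∃ L : ℝ, Tendsto (fun n : ℕ => (γ n : ℝ) / n) atTop (nhds L) := by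
  -- natural powers of elements of C are in C
  have hpow : ∀ (x : D), x ∈ C → ∀ k : ℕ, x ^ k ∈ C := by
    intro x hx k
    induction k with
    | zero => simpa using hone
    | succ k ih => rw [pow_succ]; exact hmul _ _ ih hx
  -- multiplicativity of the order
  have hmul' : ∀ a b x y : D, a * x⁻¹ ∈ C → b * y⁻¹ ∈ C → (a * b) * (x * y)⁻¹ ∈ C := by
    intro a b x y ha hb
    have h1 : a * (b * y⁻¹) * a⁻¹ ∈ C := hconj _ _ hb
    have h2 : (a * (b * y⁻¹) * a⁻¹) * (a * x⁻¹) ∈ C := hmul _ _ h1 ha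
    have : (a * (b * y⁻¹) * a⁻¹) * (a * x⁻¹) = (a * b) * (x * y)⁻¹ := by
      group
    rwa [this] at h2
  -- key nonnegativity: f^k ∈ C → 0 ≤ k
  have hkey : ∀ k : ℤ, f ^ k ∈ C → 0 ≤ k := by
    intro k hk
    by_contra hneg
    push_neg at hneg
    set j : ℕ := (-k).toNat with hj
    have hj1 : 1 ≤ j := by omega
    have hjk : (j : ℤ) = -k := by omega
    have hfj : f ^ j ∈ C := hpow f hfC j
    have hfj1 : f ^ j = 1 := by
      apply hanti (f ^ j) 1
      · simpa using hfj
      · have : (f ^ j)⁻¹ = f ^ k := by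
          rw [← zpow_natCast, hjk, zpow_neg, inv_inv]
        simpa [this] using hk
    have hfinv : f⁻¹ ∈ C := by
      have h1 : f ^ (j - 1) * f = 1 := by
        rw [← pow_succ, (by omega : j - 1 + 1 = j)]; exact hfj1
      have h2 : f ^ (j - 1) = f⁻¹ := eq_inv_of_mul_eq_one_left h1
      rw [← h2]; exact hpow f hfC _
    exact hfne (hanti f 1 (by simpa using hfC) (by simpa using hfinv))
  -- membership statements from hγ
  have hmem : ∀ n : ℕ, f ^ (γ n) * (g ^ n)⁻¹ ∈ C := fun n => (hγ n).1
  -- subadditivity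
  have hsub : Subadditive (fun n : ℕ => (γ n : ℝ)) := by
    intro m n
    have key : γ (m + n) ≤ γ m + γ n := by
      apply (hγ (m + n)).2
      have := hmul' _ _ _ _ (hmem m) (hmem n)
      rw [← zpow_add, ← pow_add] at this
      exact this
    show ((γ (m + n) : ℤ) : ℝ) ≤ ((γ m : ℤ) : ℝ) + ((γ n : ℤ) : ℝ)
    exact_mod_cast key
  -- lower bound from dominance
  obtain ⟨m, hm⟩ := hdom g⁻¹
  rw [inv_inv] at hm
  have hlow : ∀ n : ℕ, -(m : ℤ) * n ≤ γ n := by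
    intro n
    have hmn : ∀ k : ℕ, f ^ ((m : ℤ) * k) * ((g⁻¹) ^ k)⁻¹ ∈ C := by
      intro k
      induction k with
      | zero => simpa using hone
      | succ k ih =>
        have hm' : f ^ (m : ℤ) * (g⁻¹)⁻¹ ∈ C := by
          rw [zpow_natCast, inv_inv]; exact hm
        have h3 := hmul' _ _ _ _ ih hm'
        rw [← zpow_add] at h3
        have e1 : (m : ℤ) * k + m = (m : ℤ) * (k + 1) := by ring
        rw [e1, ← pow_succ] at h3
        exact_mod_cast h3
    have h4 := hmul' _ _ _ _ (hmem n) (hmn n)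
    rw [← zpow_add, inv_pow, mul_inv_cancel, inv_one, mul_one] at h4
    have := hkey _ h4
    linarith
  have hbdd : BddBelow (Set.range fun n : ℕ => (γ n : ℝ) / n) := by
    refine ⟨-(m : ℝ), ?_⟩
    rintro x ⟨n, rfl⟩
    rcases Nat.eq_zero_or_pos n with hn | hn
    · subst hn; simp
    · rw [le_div_iff₀ (by positivity : (0:ℝ) < n)]
      have := hlow n
      have : (-(m:ℤ) * n : ℝ) ≤ (γ n : ℝ) := by exact_mod_cast this
      push_cast at this ⊢
      linarith
  exact ⟨hsub.lim, hsub.tendsto_lim hbdd⟩
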